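/- Let T > 0, let k : [0,T] → ℝ be continuously differentiable, and for λ > 0 define G_λ(u) := λ·k(u)·sin(u/λ). Then for every continuous φ : [0,T] → ℝ, ∫₀ᵀ φ(u)·(G_λ′(u))² du → (1/2)∫₀ᵀ φ(u)·k(u)² du as λ → 0⁺. In particular G_λ → 0 uniformly, while (G_λ′)² converges weakly to k²/2 rather than to 0. -/

import Mathlib

open MeasureTheory Filter Real
open scoped Topology FourierTransform

/-- Riemann–Lebesgue on an interval, in the oscillatory form needed here. -/
lemma riemann_lebesgue_interval (T : ℝ) (hT : 0 ≤ T) (f : ℝ → ℝ) (hf : Continuous f) :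
    Tendsto (fun l : ℝ => ∫ u in (0:ℝ)..T, f u * Real.cos (2 * (u / l)))
      (𝓝[>] 0) (𝓝 0) := by
  set g : ℝ → ℂ := (Set.Ioc (0:ℝ) T).indicator (fun v => ((f v : ℂ))) with hg_def
  have hg : Integrable g := by
    have h1 : IntegrableOn (fun v : ℝ => ((f v : ℂ))) (Set.Ioc (0:ℝ) T) := by
      apply Continuous.integrableOn_Ioc
      exact Complex.continuous_ofReal.comp hf
    exact h1.integrable_indicator measurableSet_Ioc
  have key := Real.tendsto_integral_exp_smul_cocompact g
  have hw : Tendsto (fun l : ℝ => 1 / (π * l)) (𝓝[>] 0) (cocompact ℝ) := by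
    have h1 : Tendsto (fun l : ℝ => π * l) (𝓝[>] 0) (𝓝[>] 0) := by
      apply tendsto_nhdsWithin_of_tendsto_nhds_of_eventually_within
      · have : Tendsto (fun l : ℝ => π * l) (𝓝 0) (𝓝 (π * 0)) :=
          (continuous_const.mul continuous_id).tendsto 0
        simpa using this.mono_left nhdsWithin_le_nhds
      · filter_upwards [self_mem_nhdsWithin] with l hl
        exact mul_pos Real.pi_pos hl
    have h3 : Tendsto (fun l : ℝ => (π * l)⁻¹) (𝓝[>] 0) atTop :=
      tendsto_inv_nhdsGT_zero.comp h1
    have h4 : Tendsto (fun l : ℝ => (π * l)⁻¹) (𝓝[>] 0) (cocompact ℝ) := by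
      refine h3.mono_right ?_
      rw [cocompact_eq_atBot_atTop]
      exact le_sup_right
    refine h4.congr fun l => ?_
    rw [one_div]
  have key2 : Tendsto (fun l : ℝ => ∫ v : ℝ, 𝐞 (-(v * (1 / (π * l)))) • g v)
      (𝓝[>] 0) (𝓝 0) := key.comp hw
  have keyre : Tendsto (fun l : ℝ => (∫ v : ℝ, 𝐞 (-(v * (1 / (π * l)))) • g v).re)
      (𝓝[>] 0) (𝓝 0) := by
    have := (Complex.continuous_re.tendsto 0).comp key2
    exact this
  refine keyre.congr' ?_
  filter_upwards [self_mem_nhdsWithin] with l hl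
  have hl0 : l ≠ 0 := ne_of_gt hl
  have hmeas : AEStronglyMeasurable (fun v : ℝ => 𝐞 (-(v * (1 / (π * l)))) • g v) volume := by
    simp only [Circle.smul_def, smul_eq_mul]
    apply AEStronglyMeasurable.mul _ hg.1
    apply Continuous.aestronglyMeasurable
    exact continuous_subtype_val.comp
      (continuous_fourierChar.comp ((continuous_id.mul continuous_const).neg))
  have hgi : Integrable (fun v : ℝ => 𝐞 (-(v * (1 / (π * l)))) • g v) := by
    refine hg.norm.mono' hmeas (ae_of_all _ fun v => ?_)
    rw [Circle.norm_smul]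
  have hpoint : ∀ v : ℝ, ((𝐞 (-(v * (1 / (π * l)))) • g v : ℂ)).re
      = (Set.Ioc (0:ℝ) T).indicator (fun u => f u * Real.cos (2 * (u / l))) v := by
    intro v
    have harg : 2 * π * -(v * (1 / (π * l))) = -(2 * (v / l)) := by
      field_simp
    rw [Circle.smul_def, Real.fourierChar_apply, harg, smul_eq_mul]
    by_cases hv : v ∈ Set.Ioc (0:ℝ) T
    · simp only [hg_def, Set.indicator_of_mem hv]
      rw [Complex.mul_re, Complex.exp_ofReal_mul_I_re]
      simp [Real.cos_neg, mul_comm]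
    · simp [hg_def, Set.indicator_of_notMem hv]
  calc (∫ v : ℝ, 𝐞 (-(v * (1 / (π * l)))) • g v).re
      = ∫ v : ℝ, ((𝐞 (-(v * (1 / (π * l)))) • g v : ℂ)).re := (integral_re hgi).symm
    _ = ∫ v : ℝ, (Set.Ioc (0:ℝ) T).indicator (fun u => f u * Real.cos (2 * (u / l))) v := by
        simp_rw [hpoint]
    _ = ∫ v in Set.Ioc (0:ℝ) T, f v * Real.cos (2 * (v / l)) :=
        integral_indicator measurableSet_Ioc
    _ = ∫ u in (0:ℝ)..T, f u * Real.cos (2 * (u / l)) :=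
        (intervalIntegral.integral_of_le hT).symm

/-- Burnett's plane-wave example: with `G_λ(u) = λ k(u) sin(u/λ)` for `k` continuously
differentiable, for every continuous `φ` one has
`∫₀ᵀ φ (G_λ')² → (1/2)∫₀ᵀ φ k²` as `λ → 0⁺`; moreover `G_λ → 0` uniformly on `[0,T]`. -/
theorem burnett_plane_wave_weak_limit (T : ℝ) (hT : 0 < T) (k : ℝ → ℝ)
    (hk : ContDiff ℝ 1 k) :
    (∀ φ : ℝ → ℝ, Continuous φ →
      Tendsto
        (fun l : ℝ =>
          ∫ u in (0 : ℝ)..T, φ u * (deriv (fun v => l * k v * Real.sin (v / l)) u) ^ 2)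
        (𝓝[>] 0) (𝓝 ((1 / 2) * ∫ u in (0 : ℝ)..T, φ u * (k u) ^ 2))) ∧
    TendstoUniformlyOn (fun (l : ℝ) (u : ℝ) => l * k u * Real.sin (u / l))
      (fun _ => 0) (𝓝[>] 0) (Set.Icc 0 T) := by
  have hkc : Continuous k := hk.continuous
  have hk'c : Continuous (deriv k) := hk.continuous_deriv le_rfl
  have hderiv : ∀ l : ℝ, l ≠ 0 → ∀ u : ℝ,
      deriv (fun v => l * k v * Real.sin (v / l)) u
        = l * deriv k u * Real.sin (u / l) + k u * Real.cos (u / l) := by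
    intro l hl u
    have hkd : HasDerivAt k (deriv k u) u :=
      ((hk.differentiable one_ne_zero) u).hasDerivAt
    have hdiv : HasDerivAt (fun v : ℝ => v / l) (1 / l) u := by
      simpa using (hasDerivAt_id u).div_const l
    have hs : HasDerivAt (fun v : ℝ => Real.sin (v / l))
        (Real.cos (u / l) * (1 / l)) u := hdiv.sin
    have hprod : HasDerivAt (fun v => l * (k v * Real.sin (v / l))) _ u :=
      (hkd.mul hs).const_mul l
    have heq : (fun v => l * k v * Real.sin (v / l))
        = fun v => l * (k v * Real.sin (v / l)) := by
      funext v; ring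
    rw [heq, hprod.deriv]
    field_simp
  constructor
  · intro φ hφ
    obtain ⟨M, hM⟩ := (isCompact_Icc (a := (0:ℝ)) (b := T)).exists_bound_of_continuousOn
      ((hφ.abs.add (hkc.abs.add hk'c.abs)).continuousOn)
    have hM0 : 0 ≤ M := le_trans (by positivity) (hM 0 (Set.left_mem_Icc.2 hT.le))
    have hbdd : ∀ u ∈ Set.Icc (0:ℝ) T, |φ u| ≤ M ∧ |k u| ≤ M ∧ |deriv k u| ≤ M := by
      intro u hu
      have h0 := hM u hu
      rw [Real.norm_eq_abs] at h0
      have h1 : |φ u| + (|k u| + |deriv k u|) ≤ M := le_trans (le_abs_self _) h0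
      refine ⟨?_, ?_, ?_⟩
      · nlinarith [abs_nonneg (k u), abs_nonneg (deriv k u)]
      · nlinarith [abs_nonneg (φ u), abs_nonneg (deriv k u)]
      · nlinarith [abs_nonneg (φ u), abs_nonneg (k u)]
    set E : ℝ → ℝ := fun l => ∫ u in (0:ℝ)..T,
      φ u * (l^2 * (deriv k u)^2 * (Real.sin (u / l))^2
        + 2 * l * deriv k u * k u * Real.sin (u / l) * Real.cos (u / l)) with hE_def
    have hEbound : ∀ l : ℝ, 0 < l → l ≤ 1 → |E l| ≤ (3 * M^3 * T) * l := by
      intro l hl hl1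
      have hb : ‖E l‖ ≤ 3 * M^3 * l * |T - 0| := by
        apply intervalIntegral.norm_integral_le_of_norm_le_const
        intro u hu
        have hu' : u ∈ Set.Icc (0:ℝ) T := by
          rw [Set.uIoc_of_le hT.le] at hu
          exact Set.Ioc_subset_Icc_self hu
        obtain ⟨hφb, hkb, hk'b⟩ := hbdd u hu'
        have hs := Real.abs_sin_le_one (u / l)
        have hc := Real.abs_cos_le_one (u / l)
        rw [Real.norm_eq_abs, abs_mul]
        have h2 : |l^2 * (deriv k u)^2 * (Real.sin (u / l))^2
            + 2 * l * deriv k u * k u * Real.sin (u / l) * Real.cos (u / l)|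
            ≤ l^2 * M^2 + 2 * l * M^2 := by
          refine le_trans (abs_add_le _ _) ?_
          have h3 : |(deriv k u)^2| ≤ M^2 := by
            rw [abs_of_nonneg (sq_nonneg _)]
            nlinarith [abs_nonneg (deriv k u), neg_abs_le (deriv k u), le_abs_self (deriv k u)]
          have h4 : |(Real.sin (u/l))^2| ≤ 1 := by
            rw [abs_of_nonneg (sq_nonneg _)]
            nlinarith [neg_abs_le (Real.sin (u/l)), le_abs_self (Real.sin (u/l))]
          gcongr
          · rw [abs_mul, abs_mul, abs_of_nonneg (sq_nonneg l)]
            calc l^2 * |(deriv k u)^2| * |(Real.sin (u/l))^2|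
                ≤ l^2 * M^2 * 1 := by
                  apply mul_le_mul (by gcongr) h4 (abs_nonneg _) (by positivity)
              _ = l^2 * M^2 := by ring
          · rw [abs_mul, abs_mul, abs_mul, abs_mul]
            have hl' : |(2:ℝ) * l| = 2 * l := abs_of_pos (by linarith)
            calc |2 * l| * |deriv k u| * |k u| * |Real.sin (u/l)| * |Real.cos (u/l)|
                ≤ (2 * l) * M * M * 1 * 1 := by rw [hl']; gcongr
              _ = 2 * l * M^2 := by ring
        calc |φ u| * |l^2 * (deriv k u)^2 * (Real.sin (u / l))^2
              + 2 * l * deriv k u * k u * Real.sin (u / l) * Real.cos (u / l)|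
            ≤ M * (l^2 * M^2 + 2 * l * M^2) :=
              mul_le_mul hφb h2 (abs_nonneg _) hM0
          _ ≤ 3 * M^3 * l := by
              have hM3 : (0:ℝ) ≤ M^3 := by positivity
              have hll : l^2 ≤ l := by nlinarith
              nlinarith [mul_nonneg hM3 (sub_nonneg.2 hll)]
      rw [Real.norm_eq_abs] at hb
      calc |E l| ≤ 3 * M^3 * l * |T - 0| := hb
        _ = (3 * M^3 * T) * l := by rw [sub_zero, abs_of_pos hT]; ring
    have hE0 : Tendsto E (𝓝[>] 0) (𝓝 0) := by
      apply squeeze_zero_norm' (a := fun l : ℝ => (3 * M^3 * T) * l)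
      · filter_upwards [Ioo_mem_nhdsGT (by norm_num : (0:ℝ) < 1)]
          with l hl
        rw [Real.norm_eq_abs]
        exact hEbound l hl.1 hl.2.le
      · have : Tendsto (fun l : ℝ => (3 * M^3 * T) * l) (𝓝 0) (𝓝 ((3 * M^3 * T) * 0)) :=
          (continuous_const.mul continuous_id).tendsto 0
        simpa using this.mono_left nhdsWithin_le_nhds
    have hRL := riemann_lebesgue_interval T hT.le (fun u => φ u * k u ^ 2)
      (hφ.mul (hkc.pow 2))
    have hmain : Tendsto (fun l : ℝ =>
        (1/2) * (∫ u in (0:ℝ)..T, φ u * (k u)^2)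
        + (1/2) * (∫ u in (0:ℝ)..T, φ u * k u ^ 2 * Real.cos (2 * (u / l))) + E l)
        (𝓝[>] 0)
        (𝓝 ((1/2) * (∫ u in (0:ℝ)..T, φ u * (k u)^2) + (1/2) * 0 + 0)) :=
      (tendsto_const_nhds.add (hRL.const_mul (1/2))).add hE0
    rw [show (1/2) * (∫ u in (0:ℝ)..T, φ u * (k u)^2) + (1/2) * 0 + 0
      = (1/2) * ∫ u in (0:ℝ)..T, φ u * (k u)^2 by ring] at hmain
    refine Tendsto.congr' ?_ hmain
    filter_upwards [self_mem_nhdsWithin] with l hl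
    have hl0 : l ≠ 0 := ne_of_gt hl
    have hcosc : Continuous fun u : ℝ => Real.cos (2 * (u / l)) :=
      Real.continuous_cos.comp (continuous_const.mul (continuous_id.div_const l))
    have hsinc : Continuous fun u : ℝ => Real.sin (u / l) :=
      Real.continuous_sin.comp (continuous_id.div_const l)
    have hcosc1 : Continuous fun u : ℝ => Real.cos (u / l) :=
      Real.continuous_cos.comp (continuous_id.div_const l)
    have hi1 : IntervalIntegrable (fun u => φ u * k u ^ 2 * (1/2)) volume 0 T :=
      (((hφ.mul (hkc.pow 2)).mul continuous_const)).intervalIntegrable 0 T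
    have hi2 : IntervalIntegrable
        (fun u => φ u * k u ^ 2 * Real.cos (2 * (u / l)) * (1/2)) volume 0 T :=
      ((((hφ.mul (hkc.pow 2)).mul hcosc).mul continuous_const)).intervalIntegrable 0 T
    have hi3 : IntervalIntegrable (fun u =>
        φ u * (l^2 * (deriv k u)^2 * (Real.sin (u / l))^2
          + 2 * l * deriv k u * k u * Real.sin (u / l) * Real.cos (u / l))) volume 0 T := by
      apply Continuous.intervalIntegrable
      exact hφ.mul (((continuous_const.mul (hk'c.pow 2)).mul (hsinc.pow 2)).add
        ((((continuous_const.mul hk'c).mul hkc).mul hsinc).mul hcosc1))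
    have hsplit : (∫ u in (0:ℝ)..T, φ u * (deriv (fun v => l * k v * Real.sin (v / l)) u) ^ 2)
        = (∫ u in (0:ℝ)..T, φ u * k u ^ 2 * (1/2))
        + ((∫ u in (0:ℝ)..T, φ u * k u ^ 2 * Real.cos (2 * (u / l)) * (1/2))
          + (∫ u in (0:ℝ)..T, φ u * (l^2 * (deriv k u)^2 * (Real.sin (u / l))^2
            + 2 * l * deriv k u * k u * Real.sin (u / l) * Real.cos (u / l)))) := by
      rw [← intervalIntegral.integral_add hi2 hi3, ← intervalIntegral.integral_add hi1
        (hi2.add hi3)]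
      apply intervalIntegral.integral_congr
      intro u _
      dsimp only
      rw [hderiv l hl0 u]
      have hcsq : Real.cos (u / l) ^ 2 = 1/2 + Real.cos (2 * (u / l)) / 2 := Real.cos_sq _
      linear_combination (φ u * k u ^ 2) * hcsq
    rw [hsplit, intervalIntegral.integral_mul_const, intervalIntegral.integral_mul_const]
    simp only [hE_def]
    ring
  · obtain ⟨M, hM⟩ := (isCompact_Icc (a := (0:ℝ)) (b := T)).exists_bound_of_continuousOn
      hkc.continuousOn
    have hM0 : 0 ≤ M := le_trans (norm_nonneg _) (hM 0 (Set.left_mem_Icc.2 hT.le))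
    rw [Metric.tendstoUniformlyOn_iff]
    intro ε hε
    have hpos : 0 < ε / (M + 1) := div_pos hε (by linarith)
    filter_upwards [Ioo_mem_nhdsGT hpos] with l hl u hu
    rw [Real.dist_eq]
    have hkb : |k u| ≤ M := by rw [← Real.norm_eq_abs]; exact hM u hu
    have hs := Real.abs_sin_le_one (u / l)
    have habs : |0 - l * k u * Real.sin (u / l)| = |l| * |k u| * |Real.sin (u / l)| := by
      rw [zero_sub, abs_neg, abs_mul, abs_mul]
    rw [habs, abs_of_pos hl.1]
    have h1 : l * |k u| * |Real.sin (u / l)| ≤ l * (M + 1) := by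
      calc l * |k u| * |Real.sin (u / l)| ≤ l * M * 1 := by
            apply mul_le_mul (by gcongr; exact hl.1.le) hs (abs_nonneg _) (mul_nonneg hl.1.le hM0)
        _ ≤ l * (M + 1) := by nlinarith [hl.1]
    have h2 : l * (M + 1) < ε := by
      have h3 : l * (M + 1) < (ε / (M + 1)) * (M + 1) :=
        mul_lt_mul_of_pos_right hl.2 (by linarith)
      rwa [div_mul_cancel₀ ε (by linarith : (M:ℝ) + 1 ≠ 0)] at h3
    linarith
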